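/- Let $n \geq 3$ and $w = (b^{n-1}a)^{n-1}(ab)^{n-1}a^2$ over the alphabet $\{a,b\}$. If $x, u, y$ are words such that $x u^n y \in w^*$, then $n^2 + n$ divides $|u|$ and $xy \in w^*$. -/

import Mathlib

/-- `k`-fold concatenation of a word. -/
def wpow {A : Type*} (u : List A) (k : ℕ) : List A := (List.replicate k u).flatten

namespace SP8

theorem wpow_zero {A : Type*} (u : List A) : wpow u 0 = [] := rfl

theorem wpow_succ {A : Type*} (u : List A) (k : ℕ) : wpow u (k+1) = u ++ wpow u k := by
  simp [wpow, List.replicate_succ]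

theorem wpow_length {A : Type*} (u : List A) (k : ℕ) : (wpow u k).length = k * u.length := by
  induction k with
  | zero => simp [wpow_zero]
  | succ k ih => rw [wpow_succ]; simp [ih, Nat.succ_mul, Nat.add_comm]

theorem wpow_add {A : Type*} (u : List A) (k l : ℕ) : wpow u (k+l) = wpow u k ++ wpow u l := by
  induction k with
  | zero => simp [wpow_zero]
  | succ k ih => rw [Nat.succ_add, wpow_succ, wpow_succ, ih, List.append_assoc]

theorem wpow_getD {A : Type*} (u : List A) (d : A) (k m : ℕ) (h : m < k * u.length) :
    (wpow u k).getD m d = u.getD (m % u.length) d := by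
  induction k generalizing m with
  | zero => rw [Nat.zero_mul] at h; omega
  | succ k ih =>
    rw [wpow_succ]
    rcases lt_or_ge m u.length with hm | hm
    · rw [List.getD_append _ _ _ _ hm, Nat.mod_eq_of_lt hm]
    · have hlen : 0 < u.length := by
        rcases Nat.eq_zero_or_pos u.length with h0|h0
        · rw [h0, Nat.mul_zero] at h; omega
        · exact h0
      rw [List.getD_append_right _ _ _ _ hm]
      rw [ih (m - u.length) (by rw [Nat.succ_mul] at h; omega)]
      congr 1
      conv_rhs => rw [show m = (m - u.length) + u.length by omega]
      rw [Nat.add_mod_right]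

theorem wpow_single {A : Type*} (c : A) (k : ℕ) : wpow [c] k = List.replicate k c := by
  induction k with
  | zero => rfl
  | succ k ih => rw [wpow_succ, ih, List.replicate_succ]; rfl

theorem wpow_nil {A : Type*} (k : ℕ) : wpow ([] : List A) k = [] := by
  induction k with
  | zero => rfl
  | succ k ih => rw [wpow_succ, ih]; rfl

theorem getD_repl {A : Type*} (c d : A) (k m : ℕ) (h : m < k) :
    (List.replicate k c).getD m d = c := by
  rw [List.getD_eq_getElem _ _ (by simpa using h)]; simp

def isA (n m : ℕ) : Prop :=
  (m < n^2 - n ∧ m % n = n - 1) ∨ (n^2 - n ≤ m ∧ (m % 2 = 0 ∨ m = n^2 + n - 1))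

instance (n m : ℕ) : Decidable (isA n m) := by unfold isA; infer_instance

theorem fact1 {n : ℕ} (hn : 3 ≤ n) : 2*n ≤ n^2 := by nlinarith

theorem fact2 (n : ℕ) : (n^2+n) % 2 = 0 := by
  obtain ⟨c, hc⟩ := Nat.even_mul_succ_self n
  have h2 : n * (n+1) = n^2 + n := by ring
  rw [h2] at hc; omega

theorem fact3 {n : ℕ} (hn : 3 ≤ n) : (n^2-n) % 2 = 0 := by
  obtain ⟨c, hc⟩ := Nat.even_mul_succ_self (n-1)
  rw [show n - 1 + 1 = n by omega, show (n-1)*n = n^2 - n by rw [Nat.sub_mul, one_mul, pow_two]] at hc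
  have := fact1 hn
  omega

theorem fact4 {n : ℕ} (hn : 3 ≤ n) : (n^2-n-1) % n = n-1 := by
  have h1 : (n-2)*n = n^2 - 2*n := by rw [Nat.sub_mul, pow_two]
  have h2 : n^2 - n - 1 = (n-1) + (n-2)*n := by rw [h1]; have := fact1 hn; omega
  rw [h2, Nat.add_mul_mod_self_right, Nat.mod_eq_of_lt (by omega)]

theorem modsucc {n m : ℕ} (hn : 2 ≤ n) (h : m % n = n - 1) : (m+1) % n = 0 := by
  rw [Nat.add_mod, h, Nat.mod_eq_of_lt (show (1:ℕ) < n by omega),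
    show n-1+1 = n by omega, Nat.mod_self]

theorem H1 {N i q : ℕ} (hN : 0 < N) (h : i % N + q < N) : (i + q) % N = i % N + q := by
  rw [Nat.add_mod, Nat.mod_eq_of_lt (a := q) (by omega), Nat.mod_eq_of_lt h]

theorem H2 {N i q : ℕ} (hN : 0 < N) (h : N ≤ i % N + q) (hq : q < N) : (i + q) % N = i % N + q - N := by
  have h2 : i % N < N := Nat.mod_lt _ hN
  rw [Nat.add_mod, Nat.mod_eq_of_lt hq, Nat.mod_eq_sub_mod h, Nat.mod_eq_of_lt (by omega)]

theorem fact1b {n : ℕ} (hn : 3 ≤ n) : 3*n ≤ n^2 := by nlinarith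

theorem aachar {n : ℕ} (hn : 3 ≤ n) (i : ℕ) :
    (isA n (i % (n^2+n)) ∧ isA n ((i+1) % (n^2+n))) ↔
      (i % (n^2+n) = n^2 - n - 1 ∨ i % (n^2+n) = n^2 + n - 2) := by
  have h2n := fact1 hn
  have hN : 0 < n^2 + n := by omega
  have hm : i % (n^2+n) < n^2+n := Nat.mod_lt _ hN
  have hNe := fact2 n
  have hMe := fact3 hn
  rcases Nat.lt_or_ge (i % (n^2+n)) (n^2+n-1) with hc | hc
  · rw [H1 hN (by omega)]
    set m := i % (n^2+n) with hmdef
    constructor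
    · rintro ⟨hA, hB⟩
      rcases hA with ⟨ha1, ha2⟩ | ⟨ha1, ha2⟩
      · rcases hB with ⟨hb1, hb2⟩ | ⟨hb1, hb2⟩
        · rw [modsucc (by omega) ha2] at hb2; omega
        · left; omega
      · rcases ha2 with ha2 | ha2
        · rcases hB with ⟨hb1, hb2⟩ | ⟨hb1, hb2⟩
          · omega
          · rcases hb2 with hb2 | hb2 <;> omega
        · omega
    · rintro (hr | hr)
      · constructor
        · exact Or.inl ⟨by omega, by rw [hr]; exact fact4 hn⟩
        · exact Or.inr ⟨by omega, Or.inl (by omega)⟩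
      · constructor
        · exact Or.inr ⟨by omega, Or.inl (by omega)⟩
        · exact Or.inr ⟨by omega, Or.inr (by omega)⟩
  · have hc2 : i % (n^2+n) = n^2+n-1 := by omega
    rw [H2 hN (by omega) (by omega), hc2]
    constructor
    · rintro ⟨-, hB⟩
      rw [show n^2+n-1+1-(n^2+n) = 0 by omega] at hB
      rcases hB with ⟨hb1, hb2⟩ | ⟨hb1, hb2⟩
      · rw [Nat.zero_mod] at hb2; omega
      · omega
    · rintro (hr | hr) <;> omega

theorem wchar {A : Type*} (a b : A) (n : ℕ) (hn : 3 ≤ n) (w : List A)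
    (hw : w = wpow (wpow [b] (n - 1) ++ [a]) (n - 1) ++ wpow [a, b] (n - 1) ++ [a, a])
    (m : ℕ) (hm : m < n^2 + n) :
    w.getD m b = if isA n m then a else b := by
  have hnsq : n ≤ n^2 := by nlinarith
  have hMeven : (n-1)*n % 2 = 0 := by
    obtain ⟨c, hc⟩ := Nat.even_mul_succ_self (n-1)
    rw [show n - 1 + 1 = n by omega] at hc
    omega
  have hNeven : (n^2+n) % 2 = 0 := by
    obtain ⟨c, hc⟩ := Nat.even_mul_succ_self n
    have h2 : n * (n+1) = n^2 + n := by ring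
    rw [h2] at hc; omega
  have hM : (n-1)*n = n^2 - n := by
    rw [Nat.sub_mul, one_mul, pow_two]
  subst hw
  rw [wpow_single]
  set z := List.replicate (n-1) b ++ [a] with hzdef
  have hzl : z.length = n := by simp [hzdef]; omega
  have hPl : (wpow z (n-1)).length = (n-1) * n := by rw [wpow_length, hzl]
  have hQl : (wpow [a,b] (n-1)).length = (n-1) * 2 := by rw [wpow_length]; norm_num
  rcases lt_or_ge m ((n-1)*n) with hlt | hge
  · -- region 1
    rw [List.getD_append _ _ _ _ (by rw [List.length_append, hPl]; omega),
        List.getD_append _ _ _ _ (by rw [hPl]; omega),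
        wpow_getD z b (n-1) m (by rw [hzl]; omega)]
    rw [hzl]
    have hr : m % n < n := Nat.mod_lt _ (by omega)
    rcases lt_or_ge (m % n) (n-1) with hr1 | hr1
    · rw [hzdef, List.getD_append _ _ _ _ (by simp; omega), getD_repl _ _ _ _ hr1]
      have hA : ¬ isA n m := by
        intro hA
        rcases hA with ⟨-, h2⟩ | ⟨h1, -⟩ <;> omega
      rw [if_neg hA]
    · have hr2 : m % n = n - 1 := by omega
      rw [hzdef, List.getD_append_right _ _ _ _ (by simp; omega)]
      have he : m % n - (List.replicate (n-1) b).length = 0 := by simp; omega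
      have hA : isA n m := Or.inl ⟨by omega, hr2⟩
      rw [he, if_pos hA]
      rfl
  · rw [List.append_assoc, List.getD_append_right _ _ _ _ (by rw [hPl]; omega), hPl]
    rcases lt_or_ge (m - (n-1)*n) ((n-1)*2) with h2 | h2
    · rw [List.getD_append _ _ _ _ (by rw [hQl]; omega),
        wpow_getD _ b (n-1) _ (by rw [List.length_cons, List.length_singleton]; omega)]
      have hmod : (m - (n-1)*n) % 2 = m % 2 := by omega
      rw [show ([a,b] : List A).length = 2 from rfl, hmod]
      rcases Nat.mod_two_eq_zero_or_one m with hp | hp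
      · have hA : isA n m := Or.inr ⟨by omega, Or.inl hp⟩
        rw [hp, if_pos hA]; rfl
      · have hA : ¬ isA n m := by
          intro hA
          rcases hA with ⟨h3, -⟩ | ⟨-, (h3 | h3)⟩ <;> omega
        rw [hp, if_neg hA]
        rfl
    · rw [List.getD_append_right _ _ _ _ (by rw [hQl]; omega), hQl]
      have hA : isA n m := Or.inr ⟨by omega, by omega⟩
      rw [if_pos hA]
      have h3 : m - (n-1)*n - (n-1)*2 = 0 ∨ m - (n-1)*n - (n-1)*2 = 1 := by omega
      rcases h3 with h3 | h3 <;> rw [h3] <;> rfl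

theorem steppair {n p j : ℕ} (hn : 3 ≤ n) (hp1 : 1 ≤ p) (hp2 : p ≤ n+2) (hex : n ≠ 3 ∨ p ≠ 5)
    (h1 : j % (n^2+n) = n^2-n-1 ∨ j % (n^2+n) = n^2+n-2)
    (h2 : (j+p) % (n^2+n) = n^2-n-1 ∨ (j+p) % (n^2+n) = n^2+n-2) : False := by
  have h2n := fact1 hn
  have h3n := fact1b hn
  have hN : 0 < n^2+n := by omega
  rcases h1 with h1 | h1
  · rw [H1 hN (by omega)] at h2
    rcases hex with hx | hx <;> omega
  · rcases Nat.lt_or_ge (j % (n^2+n) + p) (n^2+n) with hc | hc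
    · rw [H1 hN hc] at h2; omega
    · rw [H2 hN hc (by omega)] at h2; omega

theorem noaa {n p s : ℕ} (hn : 3 ≤ n) (hp1 : 1 ≤ p) (hp2 : p ≤ n+2) (hex : n ≠ 3 ∨ p ≠ 5)
    (hper : ∀ i, s ≤ i → i + p < s + n*p → (isA n (i % (n^2+n)) ↔ isA n ((i+p) % (n^2+n)))) :
    ∀ i, s ≤ i → i + 1 < s + n*p → ¬ (isA n (i % (n^2+n)) ∧ isA n ((i+1) % (n^2+n))) := by
  intro i hi1 hi2 haa
  have h3p : 3*p ≤ n*p := Nat.mul_le_mul_right p hn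
  have h2n := fact1 hn
  have hr := (aachar hn i).mp haa
  rcases Nat.lt_or_ge (i + p + 1) (s + n*p) with hc | hc
  · have e1 := (hper i hi1 (by omega)).mp haa.1
    have e2 := (hper (i+1) (by omega) (by omega)).mp haa.2
    rw [show i+1+p = i+p+1 by ring] at e2
    exact steppair hn hp1 hp2 hex hr ((aachar hn (i+p)).mp ⟨e1, e2⟩)
  · have hip : s + p ≤ i := by omega
    have e1 := (hper (i-p) (by omega) (by omega)).mpr
    rw [Nat.sub_add_cancel (by omega)] at e1
    have e2 := (hper (i-p+1) (by omega) (by omega)).mpr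
    rw [show i-p+1+p = i+1 by omega] at e2
    have hr2 := (aachar hn (i-p)).mp ⟨e1 haa.1, e2 haa.2⟩
    rw [show i = (i-p)+p by omega] at hr
    exact steppair hn hp1 hp2 hex hr2 hr

theorem maxagap {n : ℕ} (hn : 3 ≤ n) (s : ℕ) :
    ∃ i, s ≤ i ∧ i < s + n ∧ isA n (i % (n^2+n)) := by
  have h2n := fact1 hn
  have hN : 0 < n^2+n := by omega
  have ht : s % (n^2+n) < n^2+n := Nat.mod_lt _ hN
  have hMn : (n-1)*n = n^2 - n := by
    have h : (n-1)*n + 1*n = n*n := by rw [← Nat.add_mul]; rw [show n-1+1 = n by omega]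
    rw [pow_two]; omega
  rcases Nat.lt_or_ge (s % (n^2+n)) (n^2-n) with hc | hc
  · set t := s % (n^2+n) with htdef
    have hdm := Nat.div_add_mod t n
    have htn : t % n < n := Nat.mod_lt _ (by omega)
    have hq : t / n < n - 1 := by
      rw [Nat.div_lt_iff_lt_mul (by omega)]
      omega
    have hmul : n * (t/n) + n ≤ n * (n-1) := by
      have := Nat.mul_le_mul_left n (show t/n + 1 ≤ n-1 by omega)
      rw [Nat.mul_add, Nat.mul_one] at this
      exact this
    have hnn : n * (n-1) = n^2 - n := by
      have : n * (n-1) + n * 1 = n * n := by rw [← Nat.mul_add, show n-1+1 = n by omega]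
      rw [pow_two]; omega
    refine ⟨s + ((n-1) - t % n), by omega, by omega, ?_⟩
    rw [H1 hN (by omega)]
    rw [show t + ((n-1) - t % n) = (n-1) + n * (t/n) by omega]
    exact Or.inl ⟨by omega, by rw [Nat.add_mul_mod_self_left, Nat.mod_eq_of_lt (by omega)]⟩
  · rcases Nat.lt_or_ge (s % (n^2+n)) (n^2+n-1) with hc2 | hc2
    · rcases Nat.mod_two_eq_zero_or_one (s % (n^2+n)) with hp | hp
      · exact ⟨s, le_rfl, by omega, Or.inr ⟨hc, Or.inl hp⟩⟩
      · refine ⟨s + 1, by omega, by omega, ?_⟩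
        rw [H1 hN (by omega)]
        exact Or.inr ⟨by omega, Or.inl (by omega)⟩
    · exact ⟨s, le_rfl, by omega, Or.inr ⟨hc, Or.inr (by omega)⟩⟩

theorem uniqmod {n a c : ℕ} (h1 : a % n = c % n) (h2 : a ≤ c) (h3 : c < a + n) : a = c := by
  have h0 := Nat.sub_mod_eq_zero_of_mod_eq (h1.symm)
  rw [Nat.mod_eq_of_lt (by omega)] at h0
  omega

theorem step {n p i : ℕ} (hn : 3 ≤ n) (hp1 : 2 ≤ p) (hp2 : p ≤ n-1)
    (h1 : isA n (i % (n^2+n))) (h2 : isA n ((i+p) % (n^2+n))) :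
    (n^2-n ≤ i % (n^2+n) ∧ i % (n^2+n) + p ≤ n^2+n-1 ∧
      (i+p) % (n^2+n) = i % (n^2+n) + p ∧ (i % (n^2+n) % 2 = 0 ∨ i % (n^2+n) = n^2+n-1)) ∨
    (i % (n^2+n) = n^2-n-1 ∧ p % 2 = 1 ∧ (i+p) % (n^2+n) = i % (n^2+n) + p) := by
  have h2n := fact1 hn
  have hN : 0 < n^2+n := by omega
  have hr : i % (n^2+n) < n^2+n := Nat.mod_lt _ hN
  set r := i % (n^2+n) with hrdef
  rcases Nat.lt_or_ge r (n^2-n) with hc | hc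
  · -- region 1
    have hra : r % n = n - 1 := by
      rcases h1 with ⟨-, h⟩ | ⟨h, -⟩
      · exact h
      · omega
    have hH : (i+p) % (n^2+n) = r + p := H1 hN (by omega)
    rcases Nat.lt_or_ge (r + p) (n^2-n) with hc2 | hc2
    · exfalso
      rw [hH] at h2
      rcases h2 with ⟨-, h⟩ | ⟨h, -⟩
      · -- (r+p) % n = n-1 impossible
        rw [Nat.add_mod, hra, Nat.mod_eq_of_lt (show p < n by omega)] at h
        have hlt : n - 1 + p - n < n := by omega
        rw [Nat.mod_eq_sub_mod (by omega), Nat.mod_eq_of_lt hlt] at h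
        omega
      · omega
    · -- r = n^2-n-1
      have hreq : r = n^2-n-1 := by
        refine uniqmod (n := n) ?_ (by omega) (by omega)
        rw [hra, fact4 hn]
      right
      refine ⟨hreq, ?_, hH⟩
      rw [hH] at h2
      have hpar := fact3 hn
      rcases h2 with ⟨h, -⟩ | ⟨-, (h | h)⟩
      · omega
      · omega
      · omega
  · -- region B
    have hc2 : r + p ≤ n^2+n-1 := by
      by_contra hcon
      have hH : (i+p) % (n^2+n) = r + p - (n^2+n) := H2 hN (by omega) (by omega)
      rw [hH] at h2
      rcases h2 with ⟨-, h⟩ | ⟨h, -⟩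
      · rw [Nat.mod_eq_of_lt (by omega)] at h; omega
      · omega
    have hH : (i+p) % (n^2+n) = r + p := H1 hN (by omega)
    left
    refine ⟨hc, hc2, hH, ?_⟩
    rcases h1 with ⟨h, -⟩ | ⟨-, h⟩
    · omega
    · exact h

theorem small_mid {n p s : ℕ} (hn : 3 ≤ n) (hp1 : 2 ≤ p) (hp2 : p ≤ n-1)
    (hper : ∀ i, s ≤ i → i + p < s + n*p → (isA n (i % (n^2+n)) ↔ isA n ((i+p) % (n^2+n)))) :
    False := by
  have h2n := fact1 hn
  have hN : 0 < n^2+n := by omega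
  obtain ⟨i0, hi01, hi02, hi0A⟩ := maxagap hn s
  set q := s + (i0 - s) % p with hqdef
  have hq2 : q ≤ i0 := by have := Nat.mod_le (i0 - s) p; omega
  have hq1 : q < s + p := by have := Nat.mod_lt (i0 - s) (y := p) (by omega); omega
  have hdm := Nat.div_add_mod (i0 - s) p
  set j0 := (i0 - s) / p with hj0def
  have hij0 : i0 = q + p * j0 := by omega
  have hj0p : p * j0 ≤ n - 1 := by omega
  have hj0n : j0 < n := by
    have h := Nat.le_mul_of_pos_left j0 (show 0 < p by omega)
    omega
  have hstep' : ∀ j, j + 1 < n → (isA n ((q + j*p) % (n^2+n)) ↔ isA n ((q + (j+1)*p) % (n^2+n))) := by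
    intro j hj
    have hmul : (j+2)*p ≤ n*p := Nat.mul_le_mul_right p (by omega)
    have hx : (j+2)*p = j*p + 2*p := by ring
    have h := hper (q + j*p) (by omega) (by omega)
    rwa [show q + j*p + p = q + (j+1)*p by ring] at h
  have hall : ∀ j, j < n → (isA n ((q + j*p) % (n^2+n)) ↔ isA n (q % (n^2+n))) := by
    intro j
    induction j with
    | zero => intro _; simp
    | succ j ih => intro hj; rw [← hstep' j hj]; exact ih (by omega)
  have hq0 : isA n (q % (n^2+n)) := by
    have h := hall j0 hj0n
    rw [show q + j0 * p = i0 by rw [Nat.mul_comm]; omega] at h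
    exact h.mp hi0A
  have hch : ∀ j, j < n → isA n ((q + j*p) % (n^2+n)) := fun j hj => (hall j hj).mpr hq0
  have hstepD : ∀ j, j + 1 < n →
      (n^2-n ≤ (q + j*p) % (n^2+n) ∧ (q + j*p) % (n^2+n) + p ≤ n^2+n-1 ∧
        (q + (j+1)*p) % (n^2+n) = (q + j*p) % (n^2+n) + p ∧
        ((q + j*p) % (n^2+n) % 2 = 0 ∨ (q + j*p) % (n^2+n) = n^2+n-1)) ∨
      ((q + j*p) % (n^2+n) = n^2-n-1 ∧ p % 2 = 1 ∧
        (q + (j+1)*p) % (n^2+n) = (q + j*p) % (n^2+n) + p) := by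
    intro j hj
    have h2 := hch (j+1) (by omega)
    have hrw : q + (j+1)*p = (q + j*p) + p := by ring
    rw [hrw] at h2 ⊢
    exact step hn hp1 hp2 (hch j (by omega)) h2
  rcases Nat.mod_two_eq_zero_or_one p with hpe | hpo
  · -- p even
    have hQ : ∀ j, j < n → (q + j*p) % (n^2+n) = q % (n^2+n) + j*p := by
      intro j
      induction j with
      | zero => intro _; simp
      | succ j ih =>
        intro hj
        rcases hstepD j (by omega) with ⟨-, -, hE, -⟩ | ⟨-, hodd, -⟩
        · rw [hE, ih (by omega)]; ring
        · omega
    have hD0 := hstepD 0 (by omega)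
    rw [show q + 0*p = q by ring] at hD0
    rcases hD0 with ⟨hge0, hle0, -, hpar0⟩ | ⟨-, hodd, -⟩
    swap
    · omega
    have hpar0' : q % (n^2+n) % 2 = 0 := by
      have hNeven : (n^2+n) % 2 = 0 := by
        obtain ⟨c, hc⟩ := Nat.even_mul_succ_self n
        have h2 : n * (n+1) = n^2 + n := by ring
        rw [h2] at hc; omega
      omega
    have hlast := hQ (n-1) (by omega)
    have hlastlt : (q + (n-1)*p) % (n^2+n) < n^2+n := Nat.mod_lt _ hN
    have hlastpar : ((n-1)*p) % 2 = 0 := by rw [Nat.mul_mod, hpe, Nat.mul_zero, Nat.zero_mod]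
    have hNeven : (n^2+n) % 2 = 0 := by
      obtain ⟨c, hc⟩ := Nat.even_mul_succ_self n
      have h2 : n * (n+1) = n^2 + n := by ring
      rw [h2] at hc; omega
    have hbound : q % (n^2+n) + (n-1)*p ≤ n^2+n-2 := by omega
    have hp2e : p = 2 := by
      by_contra hc
      have h3 : 3 ≤ p := by omega
      have := Nat.mul_le_mul_left (n-1) h3
      omega
    subst hp2e
    have hq0v : q % (n^2+n) = n^2-n := by omega
    have hqs : q = s ∨ q = s + 1 := by omega
    have hnoaa := noaa hn (by omega) (by omega) (Or.inr (by omega)) hper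
    rcases hqs with hqs | hqs
    · -- aa at s + 2n-2
      have hA1 : isA n ((q + (n-1)*2) % (n^2+n)) := hch (n-1) (by omega)
      have hA2 : isA n ((q + (n-1)*2 + 1) % (n^2+n)) := by
        rw [H1 hN (by omega)]
        rw [hlast, hq0v]
        exact Or.inr ⟨by omega, Or.inr (by omega)⟩
      exact hnoaa (q + (n-1)*2) (by omega) (by omega) ⟨hA1, hA2⟩
    · -- aa at s
      have hsm : s % (n^2+n) = n^2-n-1 := by
        rcases Nat.lt_or_ge (s % (n^2+n)) (n^2+n-1) with hc | hc
        · have := H1 (i := s) (q := 1) hN (by omega)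
          rw [show s + 1 = q by omega] at this
          omega
        · exfalso
          have hse : s % (n^2+n) = n^2+n-1 := by
            have := Nat.mod_lt s (y := n^2+n) hN
            omega
          have := H2 (i := s) (q := 1) hN (by omega) (by omega)
          rw [show s + 1 = q by omega] at this
          omega
      have hA1 : isA n (s % (n^2+n)) := by
        rw [hsm]; exact Or.inl ⟨by omega, fact4 hn⟩
      have hA2 : isA n ((s+1) % (n^2+n)) := by
        rw [show s + 1 = q by omega]; exact hq0
      exact hnoaa s (le_rfl) (by omega) ⟨hA1, hA2⟩
  · -- p odd
    have hn4 : 4 ≤ n := by omega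
    have hD0 := hstepD 0 (by omega)
    rw [show q + 0*p = q by ring, show q + (0+1)*p = q + 1*p by ring] at hD0
    have hr1ge : n^2-n ≤ (q + 1*p) % (n^2+n) := by
      rcases hD0 with ⟨hge0, -, hE, -⟩ | ⟨heq0, -, hE⟩ <;> rw [hE] <;> omega
    rcases hstepD 1 (by omega) with ⟨-, hle1, hE1, hpar1⟩ | ⟨heq1, -, -⟩
    swap
    · omega
    have hr1even : (q + 1*p) % (n^2+n) % 2 = 0 := by
      rcases hpar1 with h | h
      · exact h
      · omega
    rcases hstepD 2 (by omega) with ⟨-, hle2, -, hpar2⟩ | ⟨heq2, -, -⟩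
    · -- r2 = r1 + p odd, so r2 = N-1, contradicting r2 + p ≤ N-1
      have hNeven : (n^2+n) % 2 = 0 := by
        obtain ⟨c, hc⟩ := Nat.even_mul_succ_self n
        have h2 : n * (n+1) = n^2 + n := by ring
        rw [h2] at hc; omega
      rw [show q + (1+1)*p = q + 2*p by ring] at hE1
      rcases hpar2 with h | h <;> omega
    · rw [show q + (1+1)*p = q + 2*p by ring] at hE1
      omega

theorem hit {N : ℕ} (hN : 0 < N) (r s : ℕ) (hr : r < N) :
    ∃ i, s ≤ i ∧ i < s + N ∧ i % N = r := by
  have ht : s % N < N := Nat.mod_lt _ hN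
  rcases le_or_gt (s % N) r with hc | hc
  · exact ⟨s + (r - s % N), by omega, by omega, by rw [H1 hN (by omega)]; omega⟩
  · refine ⟨s + (r + N - s % N), by omega, by omega, ?_⟩
    rw [H2 hN (by omega) (by omega)]
    omega

theorem small_one {n s : ℕ} (hn : 3 ≤ n)
    (hper : ∀ i, s ≤ i → i + 1 < s + n*1 → (isA n (i % (n^2+n)) ↔ isA n ((i+1) % (n^2+n)))) :
    False := by
  obtain ⟨i0, hi01, hi02, hi0A⟩ := maxagap hn s
  have hall : ∀ j, j < n → (isA n ((s + j) % (n^2+n)) ↔ isA n (s % (n^2+n))) := by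
    intro j
    induction j with
    | zero => intro _; simp
    | succ j ih =>
      intro hj
      rw [show s + (j+1) = (s + j) + 1 by ring, ← hper (s+j) (by omega) (by omega)]
      exact ih (by omega)
  have hs0 : isA n (s % (n^2+n)) := by
    have h := hall (i0 - s) (by omega)
    rw [show s + (i0 - s) = i0 by omega] at h
    exact h.mp hi0A
  have hs1 : isA n ((s+1) % (n^2+n)) := (hall 1 (by omega)).mpr hs0
  exact noaa hn le_rfl (by omega) (Or.inr (by omega)) hper s le_rfl (by omega) ⟨hs0, hs1⟩

theorem small_top {n p s : ℕ} (hn : 3 ≤ n) (hp1 : n ≤ p) (hp2 : p ≤ n+2) (hex : n ≠ 3 ∨ p ≠ 5)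
    (hper : ∀ i, s ≤ i → i + p < s + n*p → (isA n (i % (n^2+n)) ↔ isA n ((i+p) % (n^2+n)))) :
    False := by
  have h2n := fact1 hn
  have h3n := fact1b hn
  have hN : 0 < n^2+n := by omega
  have hnp : n*n ≤ n*p := Nat.mul_le_mul_left n hp1
  have hnn : n*n = n^2 := (pow_two n).symm
  have ht : s % (n^2+n) < n^2+n := Nat.mod_lt _ hN
  -- find i in [s, s + n^2-n] with i % N ∈ {r1, r2}
  have hi : ∃ i, s ≤ i ∧ i ≤ s + (n^2-n) ∧
      (i % (n^2+n) = n^2-n-1 ∨ i % (n^2+n) = n^2+n-2) := by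
    rcases le_or_gt (s % (n^2+n)) (n^2-n-1) with hc | hc
    · exact ⟨s + (n^2-n-1 - s % (n^2+n)), by omega, by omega,
        Or.inl (by rw [H1 hN (by omega)]; omega)⟩
    · rcases le_or_gt (s % (n^2+n)) (n^2+n-2) with hc2 | hc2
      · exact ⟨s + (n^2+n-2 - s % (n^2+n)), by omega, by omega,
          Or.inr (by rw [H1 hN (by omega)]; omega)⟩
      · refine ⟨s + (n^2-n + (n^2+n) - 1 - s % (n^2+n)), by omega, by omega,
          Or.inl ?_⟩
        rw [H2 hN (by omega) (by omega)]
        omega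
  obtain ⟨i, hi1, hi2, hi3⟩ := hi
  have haa := (aachar hn i).mpr hi3
  exact noaa hn (by omega) hp2 hex hper i hi1 (by omega) haa

theorem small35 {s : ℕ}
    (hper : ∀ i, s ≤ i → i + 5 < s + 3*5 → (isA 3 (i % (3^2+3)) ↔ isA 3 ((i+5) % (3^2+3)))) :
    False := by
  have h12 : (3:ℕ)^2+3 = 12 := by norm_num
  simp only [h12, show (3:ℕ)*5 = 15 from by norm_num] at hper
  set i := s + ((12 - s % 12) % 12) with hidef
  have hi0 : i % 12 = 0 := by omega
  have hile : s ≤ i ∧ i ≤ s + 11 := by omega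
  rcases le_or_gt (s + 4) i with hc | hc
  · have e := hper (i - 4) (by omega) (by omega)
    rw [show i - 4 + 5 = i + 1 by omega] at e
    rw [show (i - 4) % 12 = 8 by omega, show (i+1) % 12 = 1 by omega] at e
    exact absurd (e.mp (by decide)) (by decide)
  · have e := hper i (by omega) (by omega)
    rw [show i % 12 = 0 by omega, show (i+5) % 12 = 5 by omega] at e
    exact absurd (e.mpr (by decide)) (by decide)

theorem small {n p s : ℕ} (hn : 3 ≤ n) (hp1 : 1 ≤ p) (hp2 : p ≤ n+2)
    (hper : ∀ i, s ≤ i → i + p < s + n*p → (isA n (i % (n^2+n)) ↔ isA n ((i+p) % (n^2+n)))) :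
    False := by
  by_cases h35 : n = 3 ∧ p = 5
  · obtain ⟨hn3, hp5⟩ := h35
    subst hn3; subst hp5
    exact small35 hper
  · have hex : n ≠ 3 ∨ p ≠ 5 := by tauto
    rcases Nat.lt_or_ge p 2 with hc | hc
    · have hp1' : p = 1 := by omega
      subst hp1'
      exact small_one hn hper
    · rcases le_or_gt p (n-1) with hc2 | hc2
      · exact small_mid hn hc hc2 hper
      · exact small_top hn (by omega) hp2 hex hper

theorem big {n p s : ℕ} (hn : 3 ≤ n) (hp1 : n + 3 ≤ p)
    (hper : ∀ i, s ≤ i → i + p < s + n*p → (isA n (i % (n^2+n)) ↔ isA n ((i+p) % (n^2+n)))) :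
    (n^2+n) ∣ p := by
  have h2n := fact1 hn
  have h3n := fact1b hn
  have hN : 0 < n^2+n := by omega
  have hkey : n^2 + n ≤ (n-1)*p := by
    have ha : (n-1)*(n+3) ≤ (n-1)*p := Nat.mul_le_mul_left _ hp1
    have hb : n^2 + n ≤ (n-1)*(n+3) := by
      obtain ⟨m, hm⟩ : ∃ m, n = m + 3 := ⟨n - 3, by omega⟩
      subst hm
      rw [show m+3-1 = m+2 by omega]
      nlinarith [sq_nonneg m]
    omega
  have hnp : (n-1)*p + p = n*p := by
    have : (n-1)*p + 1*p = n*p := by rw [← Nat.add_mul]; rw [show n-1+1 = n by omega]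
    omega
  -- extend periodicity to all i ≥ s
  have hext : ∀ i, s ≤ i → (isA n (i % (n^2+n)) ↔ isA n ((i+p) % (n^2+n))) := by
    intro i
    induction i using Nat.strong_induction_on with
    | _ i ih =>
      intro hi
      rcases Nat.lt_or_ge (i + p) (s + n*p) with hc | hc
      · exact hper i hi hc
      · have hiN : s + (n^2+n) ≤ i := by omega
        have h1 : i % (n^2+n) = (i - (n^2+n)) % (n^2+n) := by
          conv_lhs => rw [show i = (i - (n^2+n)) + (n^2+n) by omega]
          rw [Nat.add_mod_right]
        have h2 : (i + p) % (n^2+n) = ((i - (n^2+n)) + p) % (n^2+n) := by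
          conv_lhs => rw [show i + p = ((i - (n^2+n)) + p) + (n^2+n) by omega]
          rw [Nat.add_mod_right]
        rw [h1, h2]
        exact ih (i - (n^2+n)) (by omega) (by omega)
  -- periodicity is closed under gcd
  set Per : ℕ → Prop := fun q => ∀ i, s ≤ i → (isA n (i % (n^2+n)) ↔ isA n ((i+q) % (n^2+n)))
    with hPer
  have perN : Per (n^2+n) := by
    intro i hi
    rw [Nat.add_mod_right]
  have perAdd : ∀ q1 q2, Per q1 → Per q2 → Per (q1 + q2) := by
    intro q1 q2 h1 h2 i hi
    rw [h1 i hi, show i + (q1 + q2) = (i + q1) + q2 by ring]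
    exact h2 (i + q1) (by omega)
  have perMul : ∀ c q, Per q → Per (c * q) := by
    intro c q hq
    induction c with
    | zero => intro i hi; simp
    | succ c ih =>
      have := perAdd _ _ ih hq
      rwa [show c * q + q = (c+1) * q by ring] at this
  have perSub : ∀ q1 q2, Per q1 → Per q2 → q2 ≤ q1 → Per (q1 - q2) := by
    intro q1 q2 h1 h2 hle i hi
    rw [h1 i hi]
    have := h2 (i + (q1 - q2)) (by omega)
    rw [show i + (q1 - q2) + q2 = i + q1 by omega] at this
    exact this.symm
  have perGcd : ∀ q1 q2, Per q1 → Per q2 → Per (Nat.gcd q1 q2) := by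
    intro q1 q2
    induction q1, q2 using Nat.gcd.induction with
    | H0 q2 => intro _ h2; rwa [Nat.gcd_zero_left]
    | H1 q1 q2 hq1 ih =>
      intro h1 h2
      rw [Nat.gcd_rec]
      refine ih ?_ h1
      have hmul := perMul (q2 / q1) q1 h1
      have hsub := perSub q2 (q2 / q1 * q1) h2 hmul (Nat.div_mul_le_self q2 q1)
      have hmd : q2 % q1 = q2 - q2 / q1 * q1 := by
        have := Nat.div_add_mod q2 q1
        have h2' : q1 * (q2 / q1) = q2 / q1 * q1 := Nat.mul_comm _ _
        omega
      rwa [hmd]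
  have perg : Per (Nat.gcd p (n^2+n)) := perGcd _ _ hext perN
  set g := Nat.gcd p (n^2+n) with hgdef
  have hgdvd : g ∣ (n^2+n) := Nat.gcd_dvd_right _ _
  have hgpos : 0 < g := Nat.gcd_pos_of_pos_right _ hN
  rcases eq_or_lt_of_le (Nat.le_of_dvd hN hgdvd) with hgN | hgN
  · have := Nat.gcd_dvd_left p (n^2+n)
    rwa [← hgdef, hgN] at this
  · exfalso
    -- g < N: use aa occurrences
    obtain ⟨i1, hi11, hi12, hi13⟩ := hit hN (n^2-n-1) s (by omega)
    have haa1 := (aachar hn i1).mpr (Or.inl hi13)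
    have haa1g : isA n ((i1+g) % (n^2+n)) ∧ isA n ((i1+g+1) % (n^2+n)) := by
      constructor
      · exact (perg i1 hi11).mp haa1.1
      · have := (perg (i1+1) (by omega)).mp haa1.2
        rwa [show i1 + 1 + g = i1 + g + 1 by ring] at this
    have hr1 := (aachar hn (i1+g)).mp haa1g
    have hg2n : g = 2*n - 1 := by
      rcases Nat.lt_or_ge (i1 % (n^2+n) + g) (n^2+n) with hc | hc
      · rw [H1 hN hc] at hr1; omega
      · rw [H2 hN hc (by omega)] at hr1; omega
    obtain ⟨i2, hi21, hi22, hi23⟩ := hit hN (n^2+n-2) s (by omega)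
    have haa2 := (aachar hn i2).mpr (Or.inr hi23)
    have haa2g : isA n ((i2+g) % (n^2+n)) ∧ isA n ((i2+g+1) % (n^2+n)) := by
      constructor
      · exact (perg i2 hi21).mp haa2.1
      · have := (perg (i2+1) (by omega)).mp haa2.2
        rwa [show i2 + 1 + g = i2 + g + 1 by ring] at this
    have hr2 := (aachar hn (i2+g)).mp haa2g
    rcases Nat.lt_or_ge (i2 % (n^2+n) + g) (n^2+n) with hc | hc
    · rw [H1 hN hc] at hr2; omega
    · rw [H2 hN hc (by omega)] at hr2; omega

end SP8

open SP8 in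
theorem stmt8 {A : Type*} (a b : A) (hab : a ≠ b) (n : ℕ) (hn : 3 ≤ n)
    (w : List A)
    (hw : w = wpow (wpow [b] (n - 1) ++ [a]) (n - 1) ++ wpow [a, b] (n - 1) ++ [a, a])
    (x u y : List A) (k : ℕ)
    (h : x ++ wpow u n ++ y = wpow w k) :
    (n ^ 2 + n) ∣ u.length ∧ ∃ m : ℕ, x ++ y = wpow w m := by
  have h2n := fact1 hn
  have hNpos : 0 < n^2+n := by omega
  have hMn : (n-1)*n = n^2 - n := by
    have h1 : (n-1)*n + 1*n = n*n := by rw [← Nat.add_mul, show n-1+1 = n by omega]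
    rw [pow_two]; omega
  have hwlen : w.length = n^2 + n := by
    have e1 : n - 1 + 1 = n := by omega
    rw [hw]
    simp [wpow_length]
    rw [e1]; omega
  rw [List.append_assoc] at h
  rcases Nat.eq_zero_or_pos u.length with hu0 | hup
  · have hu : u = [] := List.length_eq_zero_iff.mp hu0
    subst hu
    rw [wpow_nil, List.nil_append] at h
    exact ⟨by simp, k, h⟩
  · have hlen : x.length + (n * u.length + y.length) = k * (n^2+n) := by
      have hl := congrArg List.length h
      simp only [List.length_append, wpow_length, hwlen] at hl
      omega
    have hnppos : 0 < n * u.length := by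
      have := Nat.mul_le_mul (show 3 ≤ n from hn) (show 1 ≤ u.length from hup)
      omega
    have hgetw : ∀ i, i < k*(n^2+n) → (wpow w k).getD i b = (if isA n (i % (n^2+n)) then a else b) := by
      intro i hi
      rw [wpow_getD w b k i (by rwa [hwlen]), hwlen]
      exact wchar a b n hn w hw _ (Nat.mod_lt _ hNpos)
    have hup' : ∀ j, j < n * u.length →
        (x ++ (wpow u n ++ y)).getD (x.length + j) b = u.getD (j % u.length) b := by
      intro j hj
      rw [List.getD_append_right _ _ _ _ (by omega), show x.length + j - x.length = j by omega,
        List.getD_append _ _ _ _ (by rw [wpow_length]; omega)]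
      exact wpow_getD u b n j hj
    have hper : ∀ i, x.length ≤ i → i + u.length < x.length + n*u.length →
        (isA n (i % (n^2+n)) ↔ isA n ((i+u.length) % (n^2+n))) := by
      intro i hi1 hi2
      have hj1 : i - x.length < n * u.length := by omega
      have hj2 : (i - x.length) + u.length < n * u.length := by omega
      have e1 := hup' (i - x.length) hj1
      have e2 := hup' ((i - x.length) + u.length) hj2
      rw [Nat.add_mod_right] at e2
      have e3 : (x ++ (wpow u n ++ y)).getD (x.length + (i - x.length)) b
          = (x ++ (wpow u n ++ y)).getD (x.length + ((i - x.length) + u.length)) b := by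
        rw [e1, e2]
      rw [h, hgetw _ (by omega), hgetw _ (by omega),
        show x.length + (i - x.length) = i by omega,
        show x.length + ((i - x.length) + u.length) = i + u.length by omega] at e3
      constructor
      · intro hP
        by_contra hQ
        rw [if_pos hP, if_neg hQ] at e3
        exact hab e3
      · intro hQ
        by_contra hP
        rw [if_neg hP, if_pos hQ] at e3
        exact hab e3.symm
    have hdvd : (n^2+n) ∣ u.length := by
      rcases le_or_gt u.length (n+2) with hc | hc
      · exact (small hn hup hc hper).elim
      · exact big hn (by omega) hper
    obtain ⟨t, ht⟩ := hdvd
    have hnt : n * u.length = (n*t) * (n^2+n) := by rw [ht]; ring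
    have hntk : n*t ≤ k := by
      refine Nat.le_of_mul_le_mul_right ?_ hNpos
      omega
    have hmul2 : (k - n*t) * (n^2+n) + (n*t) * (n^2+n) = k * (n^2+n) := by
      rw [← Nat.add_mul]
      congr 1
      omega
    refine ⟨⟨t, ht⟩, k - n*t, ?_⟩
    have hsplit1 : wpow w k = wpow w (k - n*t) ++ wpow w (n*t) := by
      rw [← wpow_add]
      congr 1
      omega
    have hsplit2 : wpow w k = wpow w (n*t) ++ wpow w (k - n*t) := by
      rw [← wpow_add]
      congr 1
      omega
    have hx : x = (wpow w (k - n*t)).take x.length := by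
      have h1 : (x ++ (wpow u n ++ y)).take x.length = x := List.take_left
      rw [h] at h1
      conv_lhs => rw [← h1]
      rw [hsplit1, List.take_append_of_le_length (by rw [wpow_length, hwlen]; omega)]
    have hy : y = (wpow w (k - n*t)).drop x.length := by
      have h1 : (x ++ (wpow u n ++ y)).drop (x.length + (wpow u n).length) = y := by
        rw [List.drop_length_add_append, List.drop_left]
      rw [h] at h1
      conv_lhs => rw [← h1]
      rw [hsplit2,
        show x.length + (wpow u n).length = (wpow w (n*t)).length + x.length by
          rw [wpow_length, wpow_length, hwlen]; omega,
        List.drop_length_add_append]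
    rw [hx, hy, List.take_append_drop]
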